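/- Let (X, ◃) be a finite rack whose structure group G_{(X,◃)} is torsion-free. Then G_{(X,◃)} is free abelian, and consequently for all x, y ∈ X one has ι(x) = ι(x ◃ y) in G_{(X,◃)}, where ι : X → G_{(X,◃)} is the canonical map. -/

import Mathlib

open scoped commutatorElement

/-- The defining relations of the structure group of a rack:
`x y = y (x ◃ y)` for all `x, y`. -/
def rackRels {X : Type*} (op : X → X → X) : Set (FreeGroup X) :=
  {w | ∃ x y, w = FreeGroup.of x * FreeGroup.of y *
    (FreeGroup.of y * FreeGroup.of (op x y))⁻¹}

/-- The structure group of a rack `(X, ◃)`. -/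
abbrev RackGroup {X : Type*} (op : X → X → X) : Type _ :=
  PresentedGroup (rackRels op)

section RackAux

variable {X : Type*} (op : X → X → X)

/-- The defining relation holds in the rack group. -/
lemma rackGroup_rel (x y : X) :
    (PresentedGroup.of x * PresentedGroup.of y : RackGroup op)
      = PresentedGroup.of y * PresentedGroup.of (op x y) := by
  have h : (PresentedGroup.mk (rackRels op))
      (FreeGroup.of x * FreeGroup.of y *
        (FreeGroup.of y * FreeGroup.of (op x y))⁻¹) = 1 := by
    apply (QuotientGroup.eq_one_iff _).mpr
    exact Subgroup.subset_normalClosure ⟨x, y, rfl⟩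
  rw [map_mul, map_inv, map_mul, map_mul, mul_inv_eq_one] at h
  exact h

/-- Right translation by `y` as a permutation of `X`. -/
noncomputable def rackPerm (hbij : ∀ y, Function.Bijective (fun x => op x y)) (y : X) : Equiv.Perm X :=
  Equiv.ofBijective _ (hbij y)

lemma rackPerm_apply (hbij : ∀ y, Function.Bijective (fun x => op x y)) (y a : X) : rackPerm op hbij y a = op a y := rfl

lemma rack_rels_hold (hsd : ∀ x y z, op (op x y) z = op (op x z) (op y z))
    (hbij : ∀ y, Function.Bijective (fun x => op x y)) : ∀ r ∈ rackRels op,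
    FreeGroup.lift (fun y => (rackPerm op hbij y)⁻¹) r = 1 := by
  rintro r ⟨x, y, rfl⟩
  have key : rackPerm op hbij (op x y) * rackPerm op hbij y
      = rackPerm op hbij y * rackPerm op hbij x := by
    ext a
    exact (hsd a x y).symm
  simp only [map_mul, map_inv, FreeGroup.lift_apply_of, mul_inv_rev, inv_inv]
  rw [mul_assoc, key]
  group

/-- The action of the rack group on the rack. -/
noncomputable def rackAct (hsd : ∀ x y z, op (op x y) z = op (op x z) (op y z))
    (hbij : ∀ y, Function.Bijective (fun x => op x y)) : RackGroup op →* Equiv.Perm X :=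
  PresentedGroup.toGroup (rack_rels_hold op hsd hbij)

lemma rackAct_of (hsd : ∀ x y z, op (op x y) z = op (op x z) (op y z))
    (hbij : ∀ y, Function.Bijective (fun x => op x y)) (y : X) :
    rackAct op hsd hbij (PresentedGroup.of y) = (rackPerm op hbij y)⁻¹ :=
  PresentedGroup.toGroup.of _

/-- The key conjugation identity in the rack group. -/
lemma rack_conj (hsd : ∀ x y z, op (op x y) z = op (op x z) (op y z))
    (hbij : ∀ y, Function.Bijective (fun x => op x y)) (g : RackGroup op) :
    ∀ x : X, PresentedGroup.of x * g
      = g * PresentedGroup.of (rackAct op hsd hbij g⁻¹ x) := by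
  have hg : g ∈ Subgroup.closure (Set.range (PresentedGroup.of : X → RackGroup op)) := by
    rw [PresentedGroup.closure_range_of]; trivial
  induction hg using Subgroup.closure_induction with
  | mem g hg =>
    obtain ⟨y, rfl⟩ := hg
    intro x
    have h : rackAct op hsd hbij (PresentedGroup.of y)⁻¹ x = op x y := by
      rw [map_inv, rackAct_of, inv_inv]; rfl
    rw [h]
    exact rackGroup_rel op x y
  | one => intro x; simp
  | mul a b ha hb iha ihb =>
    intro x
    rw [← mul_assoc, iha x, mul_assoc, ihb _, ← mul_assoc, mul_inv_rev, map_mul]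
    rfl
  | inv a ha iha =>
    intro x
    have h1 := iha (rackAct op hsd hbij a x)
    have h2 : rackAct op hsd hbij a⁻¹ (rackAct op hsd hbij a x) = x := by
      rw [map_inv]; exact (rackAct op hsd hbij a).symm_apply_apply _
    rw [h2] at h1
    have h3 : PresentedGroup.of (rackAct op hsd hbij a x)
        = a * PresentedGroup.of x * a⁻¹ := by
      rw [← h1]; group
    rw [inv_inv, h3]; group

/-- Elements acting trivially are central. -/
lemma rack_ker_central (hsd : ∀ x y z, op (op x y) z = op (op x z) (op y z))
    (hbij : ∀ y, Function.Bijective (fun x => op x y))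
    (g : RackGroup op) (hg : rackAct op hsd hbij g = 1)
    (h : RackGroup op) : h * g = g * h := by
  have hcomm : ∀ x : X, PresentedGroup.of x * g = g * PresentedGroup.of x := by
    intro x
    have := rack_conj op hsd hbij g x
    rw [map_inv, hg, inv_one] at this
    simpa using this
  have hle : Subgroup.closure (Set.range (PresentedGroup.of : X → RackGroup op))
      ≤ Subgroup.centralizer {g} := by
    rw [Subgroup.closure_le]
    rintro _ ⟨y, rfl⟩
    rw [SetLike.mem_coe, Subgroup.mem_centralizer_iff]
    rintro _ rfl
    exact (hcomm y).symm
  have hh : h ∈ Subgroup.centralizer {g} := by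
    apply hle
    rw [PresentedGroup.closure_range_of]; trivial
  exact (Subgroup.mem_centralizer_iff.mp hh g rfl).symm

end RackAux

section CommAux

variable {G : Type*} [Group G]

lemma comm_center_left (a b z : G) (hz : z * b = b * z) :
    ⁅a * z, b⁆ = ⁅a, b⁆ := by
  have h : MulAut.conj (a * z) b = MulAut.conj a b := by
    rw [map_mul, MulAut.mul_apply, MulAut.conj_apply z b, hz, mul_inv_cancel_right]
  simp only [commutatorElement_def]
  rw [← MulAut.conj_apply (a * z) b, ← MulAut.conj_apply a b, h]

lemma comm_center_right (a b w : G) (hw : ∀ g, w * g = g * w) :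
    ⁅a, b * w⁆ = ⁅a, b⁆ := by
  simp only [commutatorElement_def, mul_inv_rev]
  have h : MulAut.conj a w = w := by
    rw [MulAut.conj_apply, ← hw a, mul_inv_cancel_right]
  calc a * (b * w) * a⁻¹ * (w⁻¹ * b⁻¹)
      = (MulAut.conj a b * MulAut.conj a w) * (w⁻¹ * b⁻¹) := by
        rw [← map_mul, MulAut.conj_apply]
    _ = a * b * a⁻¹ * b⁻¹ := by
        rw [h, MulAut.conj_apply, mul_assoc (a * b * a⁻¹) w, mul_inv_cancel_left]

end CommAux

/-- If the structure group of a finite rack is torsion-free, then it is free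
abelian, and consequently `ι x = ι (x ◃ y)` for all `x, y`. -/
theorem rack_group_torsion_free {X : Type*} [Fintype X] (op : X → X → X)
    (hsd : ∀ x y z, op (op x y) z = op (op x z) (op y z))
    (hbij : ∀ y, Function.Bijective (fun x => op x y))
    (htf : ∀ g : RackGroup op, g ≠ 1 → ¬IsOfFinOrder g) :
    (∃ I : Type, Nonempty (RackGroup op ≃* Multiplicative (I →₀ ℤ))) ∧
      ∀ x y : X, (PresentedGroup.of x : RackGroup op) = PresentedGroup.of (op x y) := by
  classical
  -- the rack group is finitely generated
  haveI hFG : Group.FG (RackGroup op) := by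
    rw [Group.fg_iff]
    exact ⟨Set.range PresentedGroup.of, PresentedGroup.closure_range_of _, Set.finite_range _⟩
  -- the kernel of the action is central and of finite index
  have hle : (rackAct op hsd hbij).ker ≤ Subgroup.center (RackGroup op) := by
    intro g hg
    rw [Subgroup.mem_center_iff]
    exact fun h => rack_ker_central op hsd hbij g hg h
  haveI : (Subgroup.center (RackGroup op)).FiniteIndex :=
    Subgroup.finiteIndex_of_le hle
  -- hence there are only finitely many commutators
  haveI hQfin : Finite (RackGroup op ⧸ Subgroup.center (RackGroup op)) :=
    inferInstance
  haveI : Finite (commutatorSet (RackGroup op)) := by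
    set Z := Subgroup.center (RackGroup op)
    set Q := RackGroup op ⧸ Z
    have hsub : commutatorSet (RackGroup op) ⊆
        Set.range (fun p : Q × Q => ⁅p.1.out, p.2.out⁆) := by
      rintro _ ⟨a, b, rfl⟩
      refine ⟨(QuotientGroup.mk a, QuotientGroup.mk b), ?_⟩
      obtain ⟨z, hza⟩ := QuotientGroup.mk_out_eq_mul Z a
      obtain ⟨w, hwb⟩ := QuotientGroup.mk_out_eq_mul Z b
      show ⁅(QuotientGroup.mk a : Q).out, (QuotientGroup.mk b : Q).out⁆ = ⁅a, b⁆
      rw [hza, hwb, comm_center_left _ _ _ ((Subgroup.mem_center_iff.mp z.2 _).symm),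
        comm_center_right _ _ _ (fun g => (Subgroup.mem_center_iff.mp w.2 g).symm)]
    exact Set.Finite.subset (Set.finite_range _) hsub
  -- Schur: the commutator subgroup is finite, hence trivial by torsion-freeness
  haveI hcfin : Finite (commutator (RackGroup op)) := inferInstance
  have hcomm : ∀ a b : RackGroup op, a * b = b * a := by
    intro a b
    have hmem : ⁅a, b⁆ ∈ commutator (RackGroup op) :=
      Subgroup.commutator_mem_commutator (Subgroup.mem_top a) (Subgroup.mem_top b)
    rw [← commutatorElement_eq_one_iff_mul_comm]
    by_contra hne
    refine htf _ hne ?_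
    have hfin : IsOfFinOrder (⟨⁅a, b⁆, hmem⟩ : commutator (RackGroup op)) :=
      isOfFinOrder_of_finite _
    obtain ⟨n, hn, hpow⟩ := (isOfFinOrder_iff_pow_eq_one).mp hfin
    refine (isOfFinOrder_iff_pow_eq_one).mpr ⟨n, hn, ?_⟩
    have := congrArg (Subtype.val) hpow
    simpa using this
  -- the conjugation conclusion
  have hconc : ∀ x y : X,
      (PresentedGroup.of x : RackGroup op) = PresentedGroup.of (op x y) := by
    intro x y
    have h := rackGroup_rel op x y
    rw [hcomm (PresentedGroup.of x) (PresentedGroup.of y)] at h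
    exact mul_left_cancel h
  refine ⟨?_, hconc⟩
  -- the rack group is a finitely generated torsion-free abelian group, hence free
  letI : CommGroup (RackGroup op) :=
    { (inferInstance : Group (RackGroup op)) with mul_comm := hcomm }
  haveI : AddGroup.FG (Additive (RackGroup op)) := AddGroup.fg_of_group_fg
  haveI : Module.Finite ℤ (Additive (RackGroup op)) :=
    Module.Finite.iff_addGroup_fg.mpr ‹_›
  haveI : NoZeroSMulDivisors ℤ (Additive (RackGroup op)) := by
    have : IsAddTorsionFree (Additive (RackGroup op)) := by
      apply IsAddTorsionFree.of_not_isOfFinAddOrder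
      intro g hg hfin
      exact htf (Additive.toMul g) hg (isOfFinAddOrder_ofMul_iff.mp hfin)
    exact IsAddTorsionFree.to_noZeroSMulDivisors_int
  haveI : Module.Free ℤ (Additive (RackGroup op)) :=
    Module.free_of_finite_type_torsion_free'
  let b := Module.Free.chooseBasis ℤ (Additive (RackGroup op))
  let n := Fintype.card (Module.Free.ChooseBasisIndex ℤ (Additive (RackGroup op)))
  let e := (b.reindex (Fintype.equivFin _)).repr
  exact ⟨Fin n, ⟨AddEquiv.toMultiplicativeRight e.toAddEquiv⟩⟩
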